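/- Let E be a real Banach space, X, Y : E → E continuous vector fields, and σ ∈ ℝ. Let φ : ℝ × E → E be the flow of X (φ(0,x) = x, ∂φ/∂s(s,x) = X(φ(s,x))) and ψ : ℝ × E → E a continuously differentiable flow of Y (ψ(0,x) = x, ∂ψ/∂t(t,x) = Y(ψ(t,x))). Assume the homothety relation: for all t and x, the derivative of ψ(t,·) at x maps X(x) to e^{−σt}·X(ψ(t,x)) (equivalently, (ψ_t)*X = e^{σt}·X). Define f(t) = (e^{σt} − 1)/σ if σ ≠ 0 and f(t) = t if σ = 0. Then for every x₀ ∈ E the curve γ(t) = ψ(t, φ(f(t), x₀)) satisfies γ(0) = x₀ and γ'(t) = X(γ(t)) + Y(γ(t)); that is, the flow of X + Y equals ψ_t ∘ φ_{f(t)}. -/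

import Mathlib

/-- Flows of a sum `X + Y` when `Y` is homothetic for `X`. Let `φ` be the flow of
`X` and `ψ` a `C¹` flow of `Y` on a Banach space `E`, and assume the homothety
relation: the derivative of `ψ(t,·)` at `x` maps `X(x)` to `e^{−σt}·X(ψ(t,x))`
(i.e. `(ψ_t)*X = e^{σt}·X`). With `f(t) = (e^{σt} − 1)/σ` for `σ ≠ 0` and
`f(t) = t` for `σ = 0`, the curve `γ(t) = ψ(t, φ(f(t), x₀))` satisfies `γ(0) = x₀`
and `γ'(t) = X(γ(t)) + Y(γ(t))`; that is, the flow of `X + Y` is `ψ_t ∘ φ_{f(t)}`. -/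
theorem stmt16 {E : Type*} [NormedAddCommGroup E] [NormedSpace ℝ E] [CompleteSpace E]
    (X Y : E → E) (hX : Continuous X) (hY : Continuous Y) (σ : ℝ)
    (φ : ℝ × E → E) (hφ0 : ∀ x : E, φ (0, x) = x)
    (hφflow : ∀ (s : ℝ) (x : E), HasDerivAt (fun r : ℝ => φ (r, x)) (X (φ (s, x))) s)
    (ψ : ℝ × E → E) (hψC1 : ContDiff ℝ 1 ψ) (hψ0 : ∀ x : E, ψ (0, x) = x)
    (hψflow : ∀ (t : ℝ) (x : E), HasDerivAt (fun s : ℝ => ψ (s, x)) (Y (ψ (t, x))) t)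
    (hhom : ∀ (t : ℝ) (x : E), fderiv ℝ (fun y : E => ψ (t, y)) x (X x)
      = Real.exp (-σ * t) • X (ψ (t, x)))
    (f : ℝ → ℝ) (hf : ∀ t : ℝ, f t = if σ = 0 then t else (Real.exp (σ * t) - 1) / σ)
    (x₀ : E) :
    ψ (0, φ (f 0, x₀)) = x₀
      ∧ ∀ t : ℝ, HasDerivAt (fun s : ℝ => ψ (s, φ (f s, x₀)))
          (X (ψ (t, φ (f t, x₀))) + Y (ψ (t, φ (f t, x₀)))) t := by
  constructor
  · have hf0 : f 0 = 0 := by rw [hf]; split <;> simp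
    rw [hf0, hφ0, hψ0]
  · intro t
    have hf' : HasDerivAt f (Real.exp (σ * t)) t := by
      have hfe : f = fun t => if σ = 0 then t else (Real.exp (σ * t) - 1) / σ :=
        funext hf
      rw [hfe]
      by_cases hσ : σ = 0
      · simp only [hσ, if_true, zero_mul, Real.exp_zero]
        simpa using hasDerivAt_id' t
      · simp only [hσ, if_false]
        have h1 : HasDerivAt (fun t : ℝ => σ * t) σ t := by
          simpa using (hasDerivAt_id t).const_mul σ
        have h3 := (h1.exp.sub_const 1).div_const σ
        rw [mul_div_cancel_right₀ _ hσ] at h3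
        exact h3
    set xt := φ (f t, x₀) with hxt
    have hx' : HasDerivAt (fun s : ℝ => φ (f s, x₀)) (Real.exp (σ * t) • X xt) t := by
      exact (hφflow (f t) x₀).scomp t hf'
    have hD : HasFDerivAt ψ (fderiv ℝ ψ (t, xt)) (t, xt) :=
      ((hψC1.differentiable one_ne_zero) (t, xt)).hasFDerivAt
    set D := fderiv ℝ ψ (t, xt) with hDdef
    have hc : HasDerivAt (fun s : ℝ => (s, φ (f s, x₀)))
        ((1 : ℝ), Real.exp (σ * t) • X xt) t := HasDerivAt.prodMk (hasDerivAt_id t) hx'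
    have hcomp : HasDerivAt (fun s : ℝ => ψ (s, φ (f s, x₀)))
        (D ((1 : ℝ), Real.exp (σ * t) • X xt)) t := hD.comp_hasDerivAt t hc
    -- compute D (1, 0)
    have h1 : HasDerivAt (fun s : ℝ => ψ (s, xt)) (D ((1 : ℝ), (0 : E))) t := by
      have := hD.comp_hasDerivAt t (HasDerivAt.prodMk (hasDerivAt_id t) (hasDerivAt_const t xt))
      exact this
    have hD10 : D ((1 : ℝ), (0 : E)) = Y (ψ (t, xt)) := h1.unique (hψflow t xt)
    -- compute D (0, X xt)
    have h2 : HasFDerivAt (fun y : E => ψ (t, y))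
        (D.comp ((0 : E →L[ℝ] ℝ).prod (ContinuousLinearMap.id ℝ E))) xt :=
      hD.comp xt (HasFDerivAt.prodMk (hasFDerivAt_const t xt) (hasFDerivAt_id xt))
    have hD0X : D ((0 : ℝ), X xt) = Real.exp (-σ * t) • X (ψ (t, xt)) := by
      have := hhom t xt
      rw [h2.fderiv] at this
      simpa using this
    have key : D ((1 : ℝ), Real.exp (σ * t) • X xt)
        = X (ψ (t, xt)) + Y (ψ (t, xt)) := by
      have hsplit : ((1 : ℝ), Real.exp (σ * t) • X xt)
          = ((1 : ℝ), (0 : E)) + Real.exp (σ * t) • ((0 : ℝ), X xt) := by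
        simp [Prod.ext_iff]
      rw [hsplit, map_add, map_smul, hD10, hD0X, smul_smul,
        ← Real.exp_add]
      have : σ * t + -σ * t = 0 := by ring
      rw [this, Real.exp_zero, one_smul, add_comm]
    rw [key] at hcomp
    exact hcomp
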